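/- arXiv:1904.12371 — 5 statements merged into one kernel-verified Lean document; each statement's English description precedes it below -/
import Mathlib

section
/- If a sub-MC of a finite Markov chain D refutes a safety property, then D refutes it too: let P be the transition function of a finite MC over finite nonempty state type S with initial state s0, let G ⊆ S, λ ∈ ℝ, and let C ⊆ S with s0 ∈ C. If Prob_{P_C}(s0,G) > λ (i.e., the sub-MC with critical states C violates the safety property P_{≤λ}(◇G)), then Prob_P(s0,G) > λ (i.e., D violates P_{≤λ}(◇G)). -/
open scoped Classical BigOperators

/-- `n`-step reachability probability `Pr_P^n(s, G)`. -/
noncomputable def Pr {S : Type*} [Fintype S] (P : S → S → ℝ) : ℕ → S → Set S → ℝ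
  | 0, s, G => if s ∈ G then 1 else 0
  | n + 1, s, G => if s ∈ G then 1 else ∑ t, P s t * Pr P n t G

/-- Reachability probability `Prob_P(s, G) = ⨆ n, Pr_P^n(s, G)`. -/
noncomputable def Prob {S : Type*} [Fintype S] (P : S → S → ℝ) (s : S) (G : Set S) : ℝ :=
  ⨆ n : ℕ, Pr P n s G

/-- `C`-restriction of `P`: states outside `C` are made absorbing. -/
noncomputable def restrictMC {S : Type*} (C : Set S) (P : S → S → ℝ) (s t : S) : ℝ :=
  if s ∈ C then P s t else (if t = s then 1 else 0)

/-- `n`-step probability of reaching `B` while avoiding `G`. -/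
noncomputable def APr {S : Type*} [Fintype S] (P : S → S → ℝ) : ℕ → S → Set S → Set S → ℝ
  | 0, s, B, _ => if s ∈ B then 1 else 0
  | n + 1, s, B, G => if s ∈ B then 1 else if s ∈ G then 0 else ∑ t, P s t * APr P n t B G

/-- `AProb_P(s, B, G) = ⨆ n, APr_P^n(s, B, G)`. -/
noncomputable def AProb {S : Type*} [Fintype S] (P : S → S → ℝ) (s : S) (B G : Set S) : ℝ :=
  ⨆ n : ℕ, APr P n s B G

/-- `s` has a path to `G` under `P`. -/
def HasPathTo {S : Type*} (P : S → S → ℝ) (s : S) (G : Set S) : Prop :=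
  ∃ (m : ℕ) (u : ℕ → S), u 0 = s ∧ (∀ i < m, 0 < P (u i) (u (i + 1))) ∧ u m ∈ G

/-- `B_P(G)`: the set of states with no path to `G` under `P`. -/
def BSet {S : Type*} (P : S → S → ℝ) (G : Set S) : Set S :=
  {s | ¬ HasPathTo P s G}

/-- Transition function `P_r` of the instantiated MC `D_r` of a family `𝔓`. -/
noncomputable def Pinst {S K : Type*} [Fintype K] (𝔓 : S → K → ℝ) (r : K → S) (s t : S) : ℝ :=
  ∑ k, if r k = t then 𝔓 s k else 0

/-- Parameter `k` occurs at some state of `C`. -/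
def OccursIn {S K : Type*} (𝔓 : S → K → ℝ) (C : Set S) (k : K) : Prop :=
  ∃ s ∈ C, 0 < 𝔓 s k

/-- `u` is reachable from `s0` under `P`. -/
def ReachableFrom {S : Type*} (P : S → S → ℝ) (s0 u : S) : Prop :=
  ∃ (m : ℕ) (v : ℕ → S), v 0 = s0 ∧ (∀ i < m, 0 < P (v i) (v (i + 1))) ∧ v m = u

lemma Pr_nonneg {S : Type*} [Fintype S] (P : S → S → ℝ) (hP0 : ∀ s t, 0 ≤ P s t)
    (G : Set S) : ∀ n s, 0 ≤ Pr P n s G := by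
  intro n
  induction n with
  | zero => intro s; simp [Pr]; positivity
  | succ n ih =>
    intro s
    simp only [Pr]
    split
    · norm_num
    · exact Finset.sum_nonneg fun t _ => mul_nonneg (hP0 s t) (ih t)

lemma Pr_le_one {S : Type*} [Fintype S] (P : S → S → ℝ) (hP0 : ∀ s t, 0 ≤ P s t)
    (hP1 : ∀ s, ∑ t, P s t = 1) (G : Set S) : ∀ n s, Pr P n s G ≤ 1 := by
  intro n
  induction n with
  | zero => intro s; simp only [Pr]; split <;> norm_num
  | succ n ih =>
    intro s
    simp only [Pr]
    split
    · norm_num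
    · calc ∑ t, P s t * Pr P n t G ≤ ∑ t, P s t * 1 :=
            Finset.sum_le_sum fun t _ => mul_le_mul_of_nonneg_left (ih t) (hP0 s t)
        _ = 1 := by simp [hP1 s]

lemma Pr_mono_succ {S : Type*} [Fintype S] (P : S → S → ℝ) (hP0 : ∀ s t, 0 ≤ P s t)
    (G : Set S) : ∀ n s, Pr P n s G ≤ Pr P (n + 1) s G := by
  intro n
  induction n with
  | zero =>
    intro s
    simp only [Pr]
    split
    · norm_num
    · exact Finset.sum_nonneg fun t _ => mul_nonneg (hP0 s t) (Pr_nonneg P hP0 G 0 t)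
  | succ n ih =>
    intro s
    simp only [Pr]
    split
    · norm_num
    · exact Finset.sum_le_sum fun t _ => mul_le_mul_of_nonneg_left (ih t) (hP0 s t)

lemma Pr_mono {S : Type*} [Fintype S] (P : S → S → ℝ) (hP0 : ∀ s t, 0 ≤ P s t)
    (G : Set S) {m n : ℕ} (h : m ≤ n) (s : S) : Pr P m s G ≤ Pr P n s G := by
  induction n with
  | zero => simp_all
  | succ n ih =>
    rcases Nat.lt_or_ge m (n + 1) with h' | h'
    · exact (ih (Nat.lt_succ_iff.mp h')).trans (Pr_mono_succ P hP0 G n s)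
    · have : m = n + 1 := le_antisymm h h'
      simp [this]

lemma Pr_restrict_le {S : Type*} [Fintype S] (P : S → S → ℝ) (hP0 : ∀ s t, 0 ≤ P s t)
    (C G : Set S) : ∀ n s, Pr (restrictMC C P) n s G ≤ Pr P n s G := by
  intro n
  induction n with
  | zero => intro s; simp [Pr]
  | succ n ih =>
    intro s
    by_cases hsG : s ∈ G
    · simp [Pr, hsG]
    simp only [Pr, if_neg hsG]
    by_cases hsC : s ∈ C
    · refine Finset.sum_le_sum fun t _ => ?_
      rw [restrictMC, if_pos hsC]
      exact mul_le_mul_of_nonneg_left (ih t) (hP0 s t)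
    · have h1 : ∑ t, restrictMC C P s t * Pr (restrictMC C P) n t G
          = Pr (restrictMC C P) n s G := by
        rw [Finset.sum_eq_single s]
        · simp [restrictMC, hsC]
        · intro t _ ht
          simp [restrictMC, hsC, ht]
        · simp
      rw [h1]
      have h2 := Pr_mono_succ P hP0 G n s
      rw [Pr, if_neg hsG] at h2
      exact (ih s).trans h2

/-- if a sub-MC refutes a safety property, the MC refutes it too. -/
theorem stmt_2 {S : Type*} [Fintype S] [Nonempty S] (P : S → S → ℝ)
    (hP0 : ∀ s t, 0 ≤ P s t) (hP1 : ∀ s, ∑ t, P s t = 1)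
    (s0 : S) (G : Set S) (lam : ℝ) (C : Set S) (hs0 : s0 ∈ C)
    (hviol : Prob (restrictMC C P) s0 G > lam) :
    Prob P s0 G > lam := by
  refine lt_of_lt_of_le hviol ?_
  have bdd : BddAbove (Set.range fun n => Pr P n s0 G) :=
    ⟨1, by rintro x ⟨n, rfl⟩; exact Pr_le_one P hP0 hP1 G n s0⟩
  refine ciSup_le fun n => ?_
  exact (Pr_restrict_le P hP0 C G n s0).trans (le_ciSup bdd n)
end

section
/- Safety–liveness duality: let P be the transition function of a finite MC over finite nonempty state type S with initial state s0, let G ⊆ S, and let B = B_P(G) be the set of states with no path to G under P. Then Prob_P(s0, G) + Prob_P(s0, B) ≥ 1. In particular, for every λ ∈ ℝ, if Prob_P(s0,G) ≤ λ (the MC violates the liveness property P_{>λ}(◇G)), then Prob_P(s0,B) ≥ 1 − λ (the MC violates the dual safety property P_{<1−λ}(◇B)). -/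
open scoped Classical BigOperators

/-- Survival probability: staying in `C` for `n` steps. -/
noncomputable def Surv {S : Type*} [Fintype S] (P : S → S → ℝ) (C : Set S) : ℕ → S → ℝ
  | 0, s => if s ∈ C then 1 else 0
  | n + 1, s => if s ∈ C then ∑ t, P s t * Surv P C n t else 0

lemma Surv_nonneg {S : Type*} [Fintype S] (P : S → S → ℝ)
    (hP0 : ∀ s t, 0 ≤ P s t) (C : Set S) : ∀ n s, 0 ≤ Surv P C n s := by
  intro n
  induction n with
  | zero => intro s; simp only [Surv]; split_ifs <;> norm_num
  | succ n ih =>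
    intro s; simp only [Surv]; split_ifs with h
    · exact Finset.sum_nonneg fun t _ => mul_nonneg (hP0 s t) (ih t)
    · norm_num

lemma Surv_le_one {S : Type*} [Fintype S] (P : S → S → ℝ)
    (hP0 : ∀ s t, 0 ≤ P s t) (hP1 : ∀ s, ∑ t, P s t = 1) (C : Set S) :
    ∀ n s, Surv P C n s ≤ 1 := by
  intro n
  induction n with
  | zero => intro s; simp only [Surv]; split_ifs <;> norm_num
  | succ n ih =>
    intro s; simp only [Surv]; split_ifs with h
    · calc ∑ t, P s t * Surv P C n t ≤ ∑ t, P s t * 1 :=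
            Finset.sum_le_sum fun t _ => mul_le_mul_of_nonneg_left (ih t) (hP0 s t)
        _ = 1 := by simp [hP1 s]
    · norm_num

lemma Surv_of_not_mem {S : Type*} [Fintype S] (P : S → S → ℝ) (C : Set S)
    {s : S} (hs : s ∉ C) : ∀ n, Surv P C n s = 0 := by
  intro n; cases n <;> simp [Surv, hs]

/-- Key: if `s` has a path to `Cᶜ`-exit... here: a path of length `m` ending in `G`,
    and `C ⊆ Gᶜ`, then survival beyond `m` steps is `< 1`. -/
lemma Surv_lt_one {S : Type*} [Fintype S] (P : S → S → ℝ)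
    (hP0 : ∀ s t, 0 ≤ P s t) (hP1 : ∀ s, ∑ t, P s t = 1) (G : Set S) (C : Set S)
    (hCG : ∀ s ∈ G, s ∉ C) :
    ∀ m (t : S), (∃ u : ℕ → S, u 0 = t ∧ (∀ i < m, 0 < P (u i) (u (i + 1))) ∧ u m ∈ G) →
      ∀ n, m ≤ n → Surv P C n t < 1 := by
  intro m
  induction m with
  | zero =>
    rintro t ⟨u, hu0, -, hum⟩ n -
    have : t ∉ C := hCG t (hu0 ▸ hum)
    rw [Surv_of_not_mem P C this]; norm_num
  | succ m ih =>
    rintro t ⟨u, hu0, hpos, hum⟩ n hn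
    obtain ⟨n, rfl⟩ : ∃ n', n = n' + 1 := ⟨n - 1, by omega⟩
    simp only [Surv]
    split_ifs with h
    · have h1 : Surv P C n (u 1) < 1 := by
        refine ih (u 1) ⟨fun i => u (i + 1), rfl, fun i hi => ?_, hum⟩ n (by omega)
        exact hpos (i + 1) (by omega)
      calc ∑ r, P t r * Surv P C n r < ∑ r, P t r * 1 := by
            refine Finset.sum_lt_sum (fun r _ =>
              mul_le_mul_of_nonneg_left (Surv_le_one P hP0 hP1 C n r) (hP0 t r))
              ⟨u 1, Finset.mem_univ _, ?_⟩
            exact mul_lt_mul_of_pos_left h1 (hu0 ▸ hpos 0 (by omega))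
        _ = 1 := by simp [hP1 t]
    · norm_num

lemma Surv_add {S : Type*} [Fintype S] (P : S → S → ℝ)
    (hP0 : ∀ s t, 0 ≤ P s t) (C : Set S) (b : ℕ) (M : ℝ)
    (hM : ∀ t, Surv P C b t ≤ M) :
    ∀ a s, Surv P C (a + b) s ≤ Surv P C a s * M := by
  intro a
  induction a with
  | zero =>
    intro s
    by_cases hs : s ∈ C
    · simpa [Surv, hs] using hM s
    · simp [Surv_of_not_mem P C hs, Surv, hs]
  | succ a ih =>
    intro s
    have : a + 1 + b = (a + b) + 1 := by omega
    rw [this]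
    by_cases hs : s ∈ C
    · simp only [Surv, if_pos hs]
      calc ∑ t, P s t * Surv P C (a + b) t ≤ ∑ t, P s t * (Surv P C a t * M) :=
            Finset.sum_le_sum fun t _ => mul_le_mul_of_nonneg_left (ih t) (hP0 s t)
        _ = (∑ t, P s t * Surv P C a t) * M := by
            rw [Finset.sum_mul]; exact Finset.sum_congr rfl fun t _ => by ring
    · simp [Surv, hs]

/-- Claim A: the three quantities cover everything. -/
lemma claimA {S : Type*} [Fintype S] (P : S → S → ℝ)
    (hP0 : ∀ s t, 0 ≤ P s t) (hP1 : ∀ s, ∑ t, P s t = 1) (G B : Set S) :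
    ∀ n s, 1 ≤ Pr P n s G + Pr P n s B + Surv P {x | x ∉ G ∧ x ∉ B} n s := by
  set C : Set S := {x | x ∉ G ∧ x ∉ B} with hC
  intro n
  induction n with
  | zero =>
    intro s
    by_cases hG : s ∈ G
    · have h1 : Pr P 0 s G = 1 := by simp [Pr, hG]
      have := Pr_nonneg P hP0 B 0 s
      have := Surv_nonneg P hP0 C 0 s
      linarith
    · by_cases hB : s ∈ B
      · have h1 : Pr P 0 s B = 1 := by simp [Pr, hB]
        have := Pr_nonneg P hP0 G 0 s
        have := Surv_nonneg P hP0 C 0 s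
        linarith
      · have hsC : s ∈ C := ⟨hG, hB⟩
        have h1 : Surv P C 0 s = 1 := by simp [Surv, hsC]
        have := Pr_nonneg P hP0 G 0 s
        have := Pr_nonneg P hP0 B 0 s
        linarith
  | succ n ih =>
    intro s
    by_cases hG : s ∈ G
    · have h1 : Pr P (n + 1) s G = 1 := by simp [Pr, hG]
      have := Pr_nonneg P hP0 B (n + 1) s
      have := Surv_nonneg P hP0 C (n + 1) s
      linarith
    · by_cases hB : s ∈ B
      · have h1 : Pr P (n + 1) s B = 1 := by simp [Pr, hB]
        have := Pr_nonneg P hP0 G (n + 1) s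
        have := Surv_nonneg P hP0 C (n + 1) s
        linarith
      · have hsC : s ∈ C := ⟨hG, hB⟩
        simp only [Pr, Surv, if_pos hsC, if_neg hG, if_neg hB]
        calc (1 : ℝ) = ∑ t, P s t * 1 := by simp [hP1 s]
          _ ≤ ∑ t, (P s t * Pr P n t G + P s t * Pr P n t B + P s t * Surv P C n t) := by
              refine Finset.sum_le_sum fun t _ => ?_
              have := ih t
              nlinarith [hP0 s t]
          _ = (∑ t, P s t * Pr P n t G) + (∑ t, P s t * Pr P n t B)
                + ∑ t, P s t * Surv P C n t := by
              rw [← Finset.sum_add_distrib, ← Finset.sum_add_distrib]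

/-- safety–liveness duality. -/
theorem stmt_8 {S : Type*} [Fintype S] [Nonempty S] (P : S → S → ℝ)
    (hP0 : ∀ s t, 0 ≤ P s t) (hP1 : ∀ s, ∑ t, P s t = 1)
    (s0 : S) (G : Set S) :
    Prob P s0 G + Prob P s0 (BSet P G) ≥ 1 ∧
    ∀ lam : ℝ, Prob P s0 G ≤ lam → Prob P s0 (BSet P G) ≥ 1 - lam := by
  classical
  set B : Set S := BSet P G with hB
  set C : Set S := {x | x ∉ G ∧ x ∉ B} with hC
  have hCG : ∀ s ∈ G, s ∉ C := fun s hs hsC => hsC.1 hs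
  -- every state of C has a path to G
  have hpath : ∀ s ∈ C, HasPathTo P s G := fun s hs => not_not.mp hs.2
  -- choose path lengths
  let f : S → ℕ := fun t => if h : HasPathTo P t G then h.choose else 0
  let N : ℕ := Finset.univ.sup f
  have hSurvN : ∀ t, Surv P C N t < 1 := by
    intro t
    by_cases ht : t ∈ C
    · have h : HasPathTo P t G := hpath t ht
      have hft : f t = h.choose := dif_pos h
      have hle : f t ≤ N := Finset.le_sup (Finset.mem_univ t)
      exact Surv_lt_one P hP0 hP1 G C hCG h.choose t h.choose_spec N (hft ▸ hle)
    · rw [Surv_of_not_mem P C ht]; norm_num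
  let M : ℝ := Finset.univ.sup' Finset.univ_nonempty (fun t => Surv P C N t)
  have hMlt : M < 1 := (Finset.sup'_lt_iff Finset.univ_nonempty).mpr fun t _ => hSurvN t
  have hMub : ∀ t, Surv P C N t ≤ M := fun t => Finset.le_sup' _ (Finset.mem_univ t)
  have hM0 : 0 ≤ M :=
    le_trans (Surv_nonneg P hP0 C N (Classical.arbitrary S)) (hMub _)
  -- survival decays geometrically
  have hpow : ∀ k s, Surv P C (k * N) s ≤ M ^ k := by
    intro k
    induction k with
    | zero =>
      intro s
      simpa using Surv_le_one P hP0 hP1 C 0 s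
    | succ k ih =>
      intro s
      have h1 : (k + 1) * N = k * N + N := by ring
      rw [h1, pow_succ]
      calc Surv P C (k * N + N) s ≤ Surv P C (k * N) s * M :=
            Surv_add P hP0 C N M hMub (k * N) s
        _ ≤ M ^ k * M := mul_le_mul_of_nonneg_right (ih s) hM0
  -- Prob bounds
  have hbddG : BddAbove (Set.range fun n => Pr P n s0 G) :=
    ⟨1, by rintro _ ⟨n, rfl⟩; exact Pr_le_one P hP0 hP1 G n s0⟩
  have hbddB : BddAbove (Set.range fun n => Pr P n s0 B) :=
    ⟨1, by rintro _ ⟨n, rfl⟩; exact Pr_le_one P hP0 hP1 B n s0⟩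
  have hleG : ∀ n, Pr P n s0 G ≤ Prob P s0 G := fun n => le_ciSup hbddG n
  have hleB : ∀ n, Pr P n s0 B ≤ Prob P s0 B := fun n => le_ciSup hbddB n
  have hk : ∀ k : ℕ, 1 - M ^ k ≤ Prob P s0 G + Prob P s0 B := by
    intro k
    have h1 := claimA P hP0 hP1 G B (k * N) s0
    have h2 := hpow k s0
    have h3 := hleG (k * N)
    have h4 := hleB (k * N)
    rw [← hC] at h1
    linarith
  have htend : Filter.Tendsto (fun k : ℕ => 1 - M ^ k) Filter.atTop (nhds 1) := by
    have h0 : Filter.Tendsto (fun k : ℕ => M ^ k) Filter.atTop (nhds 0) :=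
      tendsto_pow_atTop_nhds_zero_of_lt_one hM0 hMlt
    simpa using Filter.Tendsto.sub tendsto_const_nhds h0
  have key : 1 ≤ Prob P s0 G + Prob P s0 B := le_of_tendsto' htend hk
  exact ⟨key, fun lam hlam => by linarith⟩
end

section
/- Zero reachability probability characterises absence of paths: let P be the transition function of a finite MC over finite nonempty state type S, let G ⊆ S, and let s be a state. Then Prob_P(s,G) = 0 if and only if s has no path to G under P, i.e., s ∈ B_P(G). -/
open scoped Classical BigOperators

lemma Pr_pos_of_path {S : Type*} [Fintype S] (P : S → S → ℝ)
    (hP0 : ∀ s t, 0 ≤ P s t) (G : Set S) :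
    ∀ (m : ℕ) (u : ℕ → S), (∀ i < m, 0 < P (u i) (u (i + 1))) → u m ∈ G →
      0 < Pr P m (u 0) G := by
  intro m
  induction m with
  | zero => intro u _ hG; simp only [Pr]; simp [hG]
  | succ m ih =>
    intro u hstep hG
    simp only [Pr]
    split
    · norm_num
    · have h1 : 0 < Pr P m (u 1) G := by
        have := ih (fun i => u (i + 1)) (fun i hi => hstep (i + 1) (by omega)) hG
        simpa using this
      refine Finset.sum_pos' (fun t _ => mul_nonneg (hP0 _ t) (Pr_nonneg P hP0 G m t)) ?_
      exact ⟨u 1, Finset.mem_univ _, mul_pos (hstep 0 (by omega)) h1⟩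

lemma path_of_Pr_pos {S : Type*} [Fintype S] (P : S → S → ℝ)
    (hP0 : ∀ s t, 0 ≤ P s t) (G : Set S) :
    ∀ (n : ℕ) (s : S), 0 < Pr P n s G → HasPathTo P s G := by
  intro n
  induction n with
  | zero =>
    intro s h
    simp only [Pr] at h
    split at h
    · exact ⟨0, fun _ => s, rfl, fun i hi => absurd hi (by omega), by assumption⟩
    · norm_num at h
  | succ n ih =>
    intro s h
    simp only [Pr] at h
    split at h
    · exact ⟨0, fun _ => s, rfl, fun i hi => absurd hi (by omega), by assumption⟩
    · have hsum : ∑ t : S, (0 : ℝ) < ∑ t, P s t * Pr P n t G := by simpa using h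
      obtain ⟨t, -, ht⟩ := Finset.exists_lt_of_sum_lt hsum
      have hPst : 0 < P s t := by
        rcases lt_or_eq_of_le (hP0 s t) with h' | h'
        · exact h'
        · exfalso; rw [← h'] at ht; simp at ht
      have hPr : 0 < Pr P n t G := by
        by_contra hc
        push_neg at hc
        exact absurd ht (not_lt.2 (mul_nonpos_of_nonneg_of_nonpos (hP0 s t) hc))
      obtain ⟨m, u, hu0, hstep, hG⟩ := ih t hPr
      refine ⟨m + 1, fun i => if i = 0 then s else u (i - 1), by simp, ?_, by simp [hG]⟩
      intro i hi
      rcases Nat.eq_zero_or_pos i with rfl | hipos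
      · simpa [hu0] using hPst
      · have : i - 1 < m := by omega
        have h1 : i ≠ 0 := by omega
        have h2 : i + 1 ≠ 0 := by omega
        simpa [h1, h2, Nat.sub_add_cancel hipos, show i + 1 - 1 = i - 1 + 1 by omega]
          using hstep (i - 1) this

/-- zero reachability probability characterises absence of paths. -/
theorem stmt_10 {S : Type*} [Fintype S] [Nonempty S] (P : S → S → ℝ)
    (hP0 : ∀ s t, 0 ≤ P s t) (hP1 : ∀ s, ∑ t, P s t = 1)
    (G : Set S) (s : S) :
    Prob P s G = 0 ↔ s ∈ BSet P G := by
  have hbdd : BddAbove (Set.range fun n => Pr P n s G) :=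
    ⟨1, by rintro x ⟨n, rfl⟩; exact Pr_le_one P hP0 hP1 G n s⟩
  constructor
  · intro h hpath
    obtain ⟨m, u, hu0, hstep, hG⟩ := hpath
    have hpos : 0 < Pr P m s G := hu0 ▸ Pr_pos_of_path P hP0 G m u hstep hG
    have hle : Pr P m s G ≤ Prob P s G := le_ciSup hbdd m
    rw [h] at hle
    exact absurd hle (not_le.2 hpos)
  · intro hB
    have hzero : ∀ n, Pr P n s G = 0 := by
      intro n
      by_contra hc
      have : 0 < Pr P n s G := lt_of_le_of_ne (Pr_nonneg P hP0 G n s) (Ne.symm hc)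
      exact hB (path_of_Pr_pos P hP0 G n s this)
    simp only [Prob, hzero]
    exact ciSup_const
end

section
/- Restriction monotonicity for avoid-constrained reachability: let P be the transition function of a finite MC over finite nonempty state type S, let C ⊆ S, and let P_C be the C-restriction of P. Then for all B, G ⊆ S, every state s, and every n : ℕ, APr_{P_C}^n(s, B, G) ≤ APr_P^n(s, B, G); consequently AProb_{P_C}(s,B,G) ≤ AProb_P(s,B,G). -/
open scoped Classical BigOperators

lemma apr_nonneg {S : Type*} [Fintype S] (P : S → S → ℝ)
    (hP0 : ∀ s t, 0 ≤ P s t) (B G : Set S) :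
    ∀ n s, 0 ≤ APr P n s B G := by
  intro n
  induction n with
  | zero => intro s; simp only [APr]; positivity
  | succ n ih =>
    intro s
    simp only [APr]
    split_ifs with h1 h2
    · norm_num
    · exact le_refl 0
    · exact Finset.sum_nonneg fun t _ => mul_nonneg (hP0 s t) (ih t)

lemma apr_le_one {S : Type*} [Fintype S] (P : S → S → ℝ)
    (hP0 : ∀ s t, 0 ≤ P s t) (hP1 : ∀ s, ∑ t, P s t = 1) (B G : Set S) :
    ∀ n s, APr P n s B G ≤ 1 := by
  intro n
  induction n with
  | zero => intro s; simp only [APr]; split_ifs <;> norm_num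
  | succ n ih =>
    intro s
    simp only [APr]
    split_ifs with h1 h2
    · exact le_refl 1
    · norm_num
    · calc ∑ t, P s t * APr P n t B G ≤ ∑ t, P s t * 1 :=
            Finset.sum_le_sum fun t _ => mul_le_mul_of_nonneg_left (ih t) (hP0 s t)
        _ = 1 := by simp [hP1 s]

lemma apr_mono {S : Type*} [Fintype S] (P : S → S → ℝ)
    (hP0 : ∀ s t, 0 ≤ P s t) (B G : Set S) :
    ∀ n s, APr P n s B G ≤ APr P (n + 1) s B G := by
  intro n
  induction n with
  | zero =>
    intro s
    simp only [APr]
    split_ifs with h1 h2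
    · exact le_refl 1
    · norm_num
    · exact Finset.sum_nonneg fun t _ => mul_nonneg (hP0 s t)
        (apr_nonneg P hP0 B G 0 t)
  | succ n ih =>
    intro s
    simp only [APr]
    split_ifs with h1 h2
    · exact le_refl 1
    · exact le_refl 0
    · exact Finset.sum_le_sum fun t _ => mul_le_mul_of_nonneg_left (ih t) (hP0 s t)

lemma apr_restrict_le {S : Type*} [Fintype S] (P : S → S → ℝ)
    (hP0 : ∀ s t, 0 ≤ P s t) (hP1 : ∀ s, ∑ t, P s t = 1)
    (C B G : Set S) :
    ∀ n s, APr (restrictMC C P) n s B G ≤ APr P n s B G := by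
  have hQ0 : ∀ s t, 0 ≤ restrictMC C P s t := by
    intro s t
    unfold restrictMC
    split_ifs <;> first | exact hP0 s t | norm_num
  intro n
  induction n with
  | zero => intro s; exact le_refl _
  | succ n ih =>
    intro s
    simp only [APr]
    split_ifs with h1 h2
    · exact le_refl 1
    · exact le_refl 0
    · by_cases hC : s ∈ C
      · refine Finset.sum_le_sum fun t _ => ?_
        have : restrictMC C P s t = P s t := by simp [restrictMC, hC]
        rw [this]
        exact mul_le_mul_of_nonneg_left (ih t) (hP0 s t)
      · have hsum : ∑ t, restrictMC C P s t * APr (restrictMC C P) n t B G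
            = APr (restrictMC C P) n s B G := by
          rw [Fintype.sum_eq_single s]
          · simp [restrictMC, hC]
          · intro t ht
            simp [restrictMC, hC, ht]
        rw [hsum]
        calc APr (restrictMC C P) n s B G ≤ APr P n s B G := ih s
          _ ≤ APr P (n + 1) s B G := apr_mono P hP0 B G n s
          _ = ∑ t, P s t * APr P n t B G := by
              simp only [APr]; rw [if_neg h1, if_neg h2]

/-- restriction monotonicity for avoid-constrained reachability. -/
theorem stmt_13 {S : Type*} [Fintype S] [Nonempty S] (P : S → S → ℝ)
    (hP0 : ∀ s t, 0 ≤ P s t) (hP1 : ∀ s, ∑ t, P s t = 1)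
    (C : Set S) (B G : Set S) (s : S) (n : ℕ) :
    APr (restrictMC C P) n s B G ≤ APr P n s B G ∧
    AProb (restrictMC C P) s B G ≤ AProb P s B G := by
  refine ⟨apr_restrict_le P hP0 hP1 C B G n s, ?_⟩
  have hbdd : BddAbove (Set.range fun n => APr P n s B G) := by
    refine ⟨1, ?_⟩
    rintro x ⟨m, rfl⟩
    exact apr_le_one P hP0 hP1 B G m s
  refine ciSup_le fun m => ?_
  exact le_trans (apr_restrict_le P hP0 hP1 C B G m s) (le_ciSup hbdd m)
end

section
/- Preservation of no-path states across realisations: let 𝔓 be a family of MCs over finite state type S with parameter type K, let G ⊆ S, let r : K → S be a realisation, and let B = B_{P_r}(G) be the set of states with no path to G under P_r. If r' : K → S is a realisation with r' k = r k for every parameter k that occurs at some state of B, then no state of B has a path to G under P_{r'}, i.e., B ⊆ B_{P_{r'}}(G). -/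
open scoped Classical BigOperators

lemma hasPath_step {S : Type*} (P : S → S → ℝ) {s t : S} {G : Set S}
    (hst : 0 < P s t) (h : HasPathTo P t G) : HasPathTo P s G := by
  obtain ⟨m, v, hv0, hvpos, hvm⟩ := h
  refine ⟨m + 1, fun j => if j = 0 then s else v (j - 1), rfl, ?_, by simpa using hvm⟩
  intro i hi
  cases i with
  | zero => simpa [hv0] using hst
  | succ i => simpa using hvpos i (by omega)

/-- preservation of no-path states across realisations. -/
theorem stmt_15 {S K : Type*} [Fintype S] [Nonempty S] [Fintype K]
    (𝔓 : S → K → ℝ) (h𝔓0 : ∀ s k, 0 ≤ 𝔓 s k) (h𝔓1 : ∀ s, ∑ k, 𝔓 s k = 1)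
    (G : Set S) (r : K → S) (r' : K → S)
    (hagree : ∀ k, OccursIn 𝔓 (BSet (Pinst 𝔓 r) G) k → r' k = r k) :
    BSet (Pinst 𝔓 r) G ⊆ BSet (Pinst 𝔓 r') G := by
  intro s hs hpath
  obtain ⟨m, u, hu0, hupos, hum⟩ := hpath
  have key : ∀ i ≤ m, u i ∈ BSet (Pinst 𝔓 r) G := by
    intro i
    induction i with
    | zero => intro _; simpa [hu0] using hs
    | succ i ih =>
      intro hi
      have hiB : u i ∈ BSet (Pinst 𝔓 r) G := ih (by omega)
      have hpos' : 0 < Pinst 𝔓 r' (u i) (u (i + 1)) := hupos i (by omega)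
      have hk : ∃ k, r' k = u (i + 1) ∧ 0 < 𝔓 (u i) k := by
        by_contra hcon
        push_neg at hcon
        have hle : Pinst 𝔓 r' (u i) (u (i + 1)) ≤ 0 := by
          apply Finset.sum_nonpos
          intro k _
          split_ifs with h
          · exact hcon k h
          · exact le_refl 0
        linarith
      obtain ⟨k, hk1, hk2⟩ := hk
      have hrk : r k = u (i + 1) := by
        rw [← hagree k ⟨u i, hiB, hk2⟩]; exact hk1
      have hposr : 0 < Pinst 𝔓 r (u i) (u (i + 1)) := by
        have hle := Finset.single_le_sum
          (f := fun k' => if r k' = u (i + 1) then 𝔓 (u i) k' else 0)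
          (fun k' _ => by split_ifs; exacts [h𝔓0 _ _, le_refl 0])
          (Finset.mem_univ k)
        rw [if_pos hrk] at hle
        unfold Pinst
        exact lt_of_lt_of_le hk2 hle
      intro hp
      exact hiB (hasPath_step _ hposr hp)
  exact key m le_rfl ⟨0, fun _ => u m, rfl, fun i h => absurd h (by omega), hum⟩
end
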